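/- Fix ε > 0 and let Δ_ε(𝒴) denote the set of p ∈ Δ(𝒴) with p(y) ≥ ε for all y. Let F₀ ⊆ F₁ ⊆ ⋯ ⊆ F_T ⊆ F be a finite filtration, set Q_t := Q_{F_t}, and let T₀ : Ω → Δ_ε(𝒴) be an F₀-measurable random variable. With the conventions 0·log 0 = 0 and 0·log(0/0) = 0, define KL(q‖p) := ∑_{y∈𝒴} q(y) log(q(y)/p(y)) and H(q) := −∑_{y∈𝒴} q(y) log q(y). Then E[−log T₀(Y)] = E[KL(Q₀ ‖ T₀)] + ∑_{t=0}^{T−1} E[KL(Q_{t+1} ‖ Q_t)] + E[H(Q_T)], all terms being well defined and finite since almost surely Q_t(y) = 0 implies Q_{t+1}(y) = 0 for every y ∈ 𝒴. -/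

import Mathlib

open MeasureTheory Finset
open scoped ENNReal

noncomputable section

/-- The probability simplex on a finite label set `𝒴`, identified with the set of
functions `p : 𝒴 → ℝ` with nonnegative coordinates summing to one. -/
def simplex (𝒴 : Type*) [Fintype 𝒴] : Set (𝒴 → ℝ) :=
  {p | (∀ y, 0 ≤ p y) ∧ ∑ y, p y = 1}

/-- Conditional risk `L(p,q) := ∑_y q(y) ℓ(p,y)`. -/
def condRisk {𝒴 : Type*} [Fintype 𝒴] (ℓ : (𝒴 → ℝ) → 𝒴 → ℝ) (p q : 𝒴 → ℝ) : ℝ :=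
  ∑ y, q y * ℓ p y

/-- Generalized entropy `E_ℓ(q) := L(q,q)`. -/
def gEntropy {𝒴 : Type*} [Fintype 𝒴] (ℓ : (𝒴 → ℝ) → 𝒴 → ℝ) (q : 𝒴 → ℝ) : ℝ :=
  condRisk ℓ q q

/-- Divergence (regret) `d_ℓ(p,q) := L(p,q) - E_ℓ(q)`. -/
def divg {𝒴 : Type*} [Fintype 𝒴] (ℓ : (𝒴 → ℝ) → 𝒴 → ℝ) (p q : 𝒴 → ℝ) : ℝ :=
  condRisk ℓ p q - gEntropy ℓ q

/-- Kullback–Leibler divergence `KL(q‖p) := ∑_y q(y) log(q(y)/p(y))`, with the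
conventions `0·log 0 = 0` and `0·log(0/0) = 0` (note `Real.log 0 = 0` in Lean). -/
def KLdiv {𝒴 : Type*} [Fintype 𝒴] (q p : 𝒴 → ℝ) : ℝ :=
  ∑ y, q y * Real.log (q y / p y)

/-- Shannon entropy `H(q) := −∑_y q(y) log q(y)`, with the convention `0·log 0 = 0`. -/
def shEntropy {𝒴 : Type*} [Fintype 𝒴] (q : 𝒴 → ℝ) : ℝ :=
  -∑ y, q y * Real.log (q y)

/-- The ε-interior `Δ_ε(𝒴)` of the simplex: distributions with all coordinates `≥ ε`. -/
def simplexEps (𝒴 : Type*) [Fintype 𝒴] (ε : ℝ) : Set (𝒴 → ℝ) :=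
  {p | p ∈ simplex 𝒴 ∧ ∀ y, ε ≤ p y}


lemma aux_integrable_of_bounded {Ω : Type*} {mΩ : MeasurableSpace Ω} {P : Measure Ω}
    [IsProbabilityMeasure P] {f : Ω → ℝ} (hf : Measurable[mΩ] f) {C : ℝ}
    (hC : ∀ ω, |f ω| ≤ C) : Integrable f P :=
  ⟨hf.aestronglyMeasurable, HasFiniteIntegral.of_bounded (C := C) (ae_of_all _ hC)⟩

lemma aux_transfer_bounded {Ω : Type*} {mΩ : MeasurableSpace Ω} {P : Measure Ω}
    [IsProbabilityMeasure P] {m : MeasurableSpace Ω} (hm : m ≤ mΩ)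
    {X q g : Ω → ℝ} (hX : Integrable X P) (hq : q =ᵐ[P] P[X | m])
    (hg : Measurable[m] g) {C : ℝ} (hgbd : ∀ ω, |g ω| ≤ C) :
    ∫ ω, q ω * g ω ∂P = ∫ ω, X ω * g ω ∂P := by
  have hgm : Measurable[mΩ] g := hg.mono hm le_rfl
  have hgX : Integrable (fun ω => g ω * X ω) P :=
    hX.bdd_mul (c := C) hgm.aestronglyMeasurable (ae_of_all _ fun ω => by simpa using hgbd ω)
  have h1 : ∫ ω, q ω * g ω ∂P = ∫ ω, g ω * (P[X|m]) ω ∂P := by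
    refine integral_congr_ae ?_
    filter_upwards [hq] with ω hω
    rw [hω, mul_comm]
  have h2 : ∫ ω, g ω * (P[X|m]) ω ∂P = ∫ ω, g ω * X ω ∂P := by
    have h3 := integral_congr_ae (condExp_mul_of_stronglyMeasurable_left hg.stronglyMeasurable hgX hX)
    have h4 := integral_condExp (μ := P) hm (f := g * X)
    rw [h3] at h4
    exact h4
  rw [h1, h2]
  exact integral_congr_ae (ae_of_all _ fun ω => mul_comm (g ω) (X ω))

lemma aux_lintegral_sup {Ω : Type*} {mΩ : MeasurableSpace Ω} {P : Measure Ω}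
    [IsProbabilityMeasure P] {q g : Ω → ℝ} (hqm : Measurable[mΩ] q) (hgm : Measurable[mΩ] g)
    (hq0 : ∀ ω, 0 ≤ q ω) (hq1 : ∀ ω, q ω ≤ 1) (hg0 : ∀ ω, g ω ≤ 0) :
    ∫⁻ ω, ENNReal.ofReal (q ω * -(g ω)) ∂P
      = ⨆ n : ℕ, ENNReal.ofReal (∫ ω, q ω * -(max (g ω) (-(n : ℝ))) ∂P) := by
  set f : ℕ → Ω → ℝ≥0∞ := fun n ω => ENNReal.ofReal (q ω * -(max (g ω) (-(n : ℝ)))) with hf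
  have hmeasn : ∀ n, Measurable (f n) := fun n =>
    (hqm.mul (hgm.max measurable_const).neg).ennreal_ofReal
  have hmono : Monotone f := by
    intro a b hab ω
    refine ENNReal.ofReal_le_ofReal ?_
    have : max (g ω) (-(b : ℝ)) ≤ max (g ω) (-(a : ℝ)) :=
      max_le_max le_rfl (by exact_mod_cast neg_le_neg (by exact_mod_cast hab))
    nlinarith [hq0 ω]
  have hsup : ∀ ω, (⨆ n, f n ω) = ENNReal.ofReal (q ω * -(g ω)) := by
    intro ω
    refine le_antisymm (iSup_le fun n => ENNReal.ofReal_le_ofReal ?_) ?_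
    · have : g ω ≤ max (g ω) (-(n : ℝ)) := le_max_left _ _
      nlinarith [hq0 ω]
    · have hn : max (g ω) (-(⌈-g ω⌉₊ : ℝ)) = g ω := by
        refine max_eq_left ?_
        have := Nat.le_ceil (-g ω)
        linarith
      calc ENNReal.ofReal (q ω * -(g ω)) = f (⌈-g ω⌉₊) ω := by rw [hf]; simp [hn]
        _ ≤ ⨆ n, f n ω := le_iSup (fun n => f n ω) _
  have hint : ∀ n : ℕ, Integrable (fun ω => q ω * -(max (g ω) (-(n : ℝ)))) P := by
    intro n
    refine aux_integrable_of_bounded ((hqm.mul (hgm.max measurable_const).neg)) (C := (n : ℝ)) ?_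
    intro ω
    have h1 : -(n : ℝ) ≤ max (g ω) (-(n : ℝ)) := le_max_right _ _
    have h2 : max (g ω) (-(n : ℝ)) ≤ 0 := max_le (hg0 ω) (by simp)
    rw [abs_le]
    constructor <;> nlinarith [hq0 ω, hq1 ω]
  calc ∫⁻ ω, ENNReal.ofReal (q ω * -(g ω)) ∂P = ∫⁻ ω, ⨆ n, f n ω ∂P := by
        refine lintegral_congr fun ω => (hsup ω).symm
    _ = ⨆ n, ∫⁻ ω, f n ω ∂P := lintegral_iSup hmeasn hmono
    _ = ⨆ n : ℕ, ENNReal.ofReal (∫ ω, q ω * -(max (g ω) (-(n : ℝ))) ∂P) := by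
        refine iSup_congr fun n => ?_
        rw [ofReal_integral_eq_lintegral_ofReal (hint n)]
        refine ae_of_all _ fun ω => ?_
        have h2 : max (g ω) (-(n : ℝ)) ≤ 0 := max_le (hg0 ω) (by simp)
        show (0 : ℝ) ≤ q ω * -(max (g ω) (-(n : ℝ)))
        nlinarith [hq0 ω]

lemma aux_key_transfer {Ω : Type*} {mΩ : MeasurableSpace Ω} {P : Measure Ω}
    [IsProbabilityMeasure P] {m m' : MeasurableSpace Ω} (hm : m ≤ mΩ) (hm' : m' ≤ mΩ)
    {X q q' g : Ω → ℝ} (hX : Integrable X P)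
    (hq : q =ᵐ[P] P[X | m]) (hq' : q' =ᵐ[P] P[X | m'])
    (hqm : Measurable[m] q) (hq'm : Measurable[m'] q')
    (hq0 : ∀ ω, 0 ≤ q ω) (hq1 : ∀ ω, q ω ≤ 1)
    (hq'0 : ∀ ω, 0 ≤ q' ω) (hq'1 : ∀ ω, q' ω ≤ 1)
    (hg : Measurable[m] g) (hg' : Measurable[m'] g)
    (hg0 : ∀ ω, g ω ≤ 0) (hlow : ∀ ω, -1 ≤ q ω * g ω) :
    Integrable (fun ω => q ω * g ω) P ∧ Integrable (fun ω => q' ω * g ω) P ∧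
      ∫ ω, q' ω * g ω ∂P = ∫ ω, q ω * g ω ∂P := by
  have hqmΩ : Measurable[mΩ] q := hqm.mono hm le_rfl
  have hq'mΩ : Measurable[mΩ] q' := hq'm.mono hm' le_rfl
  have hgmΩ : Measurable[mΩ] g := hg.mono hm le_rfl
  -- truncated equality of integrals
  have htrunc : ∀ n : ℕ, ∫ ω, q ω * -(max (g ω) (-(n : ℝ))) ∂P
      = ∫ ω, q' ω * -(max (g ω) (-(n : ℝ))) ∂P := by
    intro n
    have hb : ∀ ω, |(-(max (g ω) (-(n : ℝ))))| ≤ (n : ℝ) := by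
      intro ω
      have h1 : -(n : ℝ) ≤ max (g ω) (-(n : ℝ)) := le_max_right _ _
      have h2 : max (g ω) (-(n : ℝ)) ≤ 0 := max_le (hg0 ω) (by simp)
      rw [abs_le]; constructor <;> linarith
    rw [aux_transfer_bounded hm hX hq (g := fun ω => -(max (g ω) (-(n : ℝ)))) ((hg.max measurable_const).neg) hb,
      aux_transfer_bounded hm' hX hq' (g := fun ω => -(max (g ω) (-(n : ℝ)))) ((hg'.max measurable_const).neg) hb]
  -- bound on the truncated integrals
  have hbd : ∀ n : ℕ, ∫ ω, q ω * -(max (g ω) (-(n : ℝ))) ∂P ≤ 1 := by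
    intro n
    have hint : Integrable (fun ω => q ω * -(max (g ω) (-(n : ℝ)))) P := by
      refine aux_integrable_of_bounded (hqmΩ.mul (hgmΩ.max measurable_const).neg)
        (C := (n : ℝ)) fun ω => ?_
      have h1 : -(n : ℝ) ≤ max (g ω) (-(n : ℝ)) := le_max_right _ _
      have h2 : max (g ω) (-(n : ℝ)) ≤ 0 := max_le (hg0 ω) (by simp)
      rw [abs_le]; constructor <;> nlinarith [hq0 ω, hq1 ω]
    calc ∫ ω, q ω * -(max (g ω) (-(n : ℝ))) ∂P ≤ ∫ _ω, (1 : ℝ) ∂P := by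
          refine integral_mono hint (integrable_const 1) fun ω => ?_
          have h1 : g ω ≤ max (g ω) (-(n : ℝ)) := le_max_left _ _
          nlinarith [hq0 ω, hlow ω, hq1 ω]
      _ = 1 := by simp
  -- lintegral identities
  have hL : ∫⁻ ω, ENNReal.ofReal (q ω * -(g ω)) ∂P
      = ⨆ n : ℕ, ENNReal.ofReal (∫ ω, q ω * -(max (g ω) (-(n : ℝ))) ∂P) :=
    aux_lintegral_sup hqmΩ hgmΩ hq0 hq1 hg0
  have hL' : ∫⁻ ω, ENNReal.ofReal (q' ω * -(g ω)) ∂P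
      = ⨆ n : ℕ, ENNReal.ofReal (∫ ω, q' ω * -(max (g ω) (-(n : ℝ))) ∂P) :=
    aux_lintegral_sup hq'mΩ hgmΩ hq'0 hq'1 hg0
  have hLeq : ∫⁻ ω, ENNReal.ofReal (q' ω * -(g ω)) ∂P
      = ∫⁻ ω, ENNReal.ofReal (q ω * -(g ω)) ∂P := by
    rw [hL, hL']
    exact iSup_congr fun n => by rw [htrunc n]
  have hLle : ∫⁻ ω, ENNReal.ofReal (q ω * -(g ω)) ∂P ≤ 1 := by
    rw [hL]
    refine iSup_le fun n => ?_
    calc ENNReal.ofReal (∫ ω, q ω * -(max (g ω) (-(n : ℝ))) ∂P) ≤ ENNReal.ofReal 1 :=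
          ENNReal.ofReal_le_ofReal (hbd n)
      _ = 1 := by simp
  -- integrability
  have hfi : ∀ (r : Ω → ℝ), Measurable[mΩ] r → (∀ ω, 0 ≤ r ω) →
      (∫⁻ ω, ENNReal.ofReal (r ω * -(g ω)) ∂P ≤ 1) → Integrable (fun ω => r ω * g ω) P := by
    intro r hrm hr0 hle
    refine ⟨(hrm.mul hgmΩ).aestronglyMeasurable, ?_⟩
    rw [hasFiniteIntegral_iff_norm]
    have : ∀ ω, ENNReal.ofReal ‖r ω * g ω‖ = ENNReal.ofReal (r ω * -(g ω)) := by
      intro ω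
      congr 1
      rw [Real.norm_eq_abs, abs_of_nonpos (by nlinarith [hr0 ω, hg0 ω])]
      ring
    calc ∫⁻ ω, ENNReal.ofReal ‖r ω * g ω‖ ∂P
        = ∫⁻ ω, ENNReal.ofReal (r ω * -(g ω)) ∂P := lintegral_congr fun ω => this ω
      _ ≤ 1 := hle
      _ < ⊤ := ENNReal.one_lt_top
  have hint1 : Integrable (fun ω => q ω * g ω) P := hfi q hqmΩ hq0 hLle
  have hint2 : Integrable (fun ω => q' ω * g ω) P := hfi q' hq'mΩ hq'0 (hLeq ▸ hLle)
  refine ⟨hint1, hint2, ?_⟩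
  -- equality of integrals via lintegrals
  have heq : ∀ (r : Ω → ℝ), Measurable[mΩ] r → (∀ ω, 0 ≤ r ω) →
      ∫ ω, r ω * g ω ∂P = -(∫⁻ ω, ENNReal.ofReal (r ω * -(g ω)) ∂P).toReal := by
    intro r hrm hr0
    have h1 : ∫ ω, r ω * g ω ∂P = -∫ ω, r ω * -(g ω) ∂P := by
      rw [← integral_neg]
      exact integral_congr_ae (ae_of_all _ fun ω => by ring)
    rw [h1, integral_eq_lintegral_of_nonneg_ae
      (ae_of_all _ fun ω => show (0:ℝ) ≤ r ω * -(g ω) by nlinarith [hr0 ω, hg0 ω])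
      (hrm.mul hgmΩ.neg).aestronglyMeasurable]
  rw [heq q hqmΩ hq0, heq q' hq'mΩ hq'0, hLeq]

lemma aux_neg_one_le_mul_log {x : ℝ} (h0 : 0 ≤ x) (h1 : x ≤ 1) : -1 ≤ x * Real.log x := by
  rcases eq_or_lt_of_le h0 with h | h
  · simp [← h]
  · have hinv := Real.log_le_sub_one_of_pos (inv_pos.2 h)
    rw [Real.log_inv] at hinv
    have hx : x * x⁻¹ = 1 := mul_inv_cancel₀ (ne_of_gt h)
    nlinarith

/-- log-loss along a filtration: information gains. For a finite
filtration `F 0 ⊆ ⋯ ⊆ F N ⊆ mΩ`, `Q t := Q_{F t}` and an `F 0`-measurable predictor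
`T₀` with values in `Δ_ε(𝒴)` (`ε > 0`),
`E[−log T₀(Y)] = E[KL(Q₀‖T₀)] + ∑_{t<N} E[KL(Q_{t+1}‖Q_t)] + E[H(Q_N)]`, all terms
being well defined since a.s. `Q_t(y) = 0` implies `Q_{t+1}(y) = 0` for every `y`. -/
theorem logloss_telescoping_decomposition
    {Ω 𝒴 : Type*} [Fintype 𝒴] [Nonempty 𝒴]
    [MeasurableSpace 𝒴] [MeasurableSingletonClass 𝒴]
    {mΩ : MeasurableSpace Ω} {P : Measure Ω} [IsProbabilityMeasure P]
    (Y : Ω → 𝒴) (hY : Measurable Y)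
    {ε : ℝ} (hε : 0 < ε)
    (N : ℕ) (F : ℕ → MeasurableSpace Ω)
    (hFmono : ∀ s t : ℕ, s ≤ t → t ≤ N → F s ≤ F t)
    (hFle : ∀ t ≤ N, F t ≤ mΩ)
    (Q : ℕ → Ω → 𝒴 → ℝ)
    (hQΔ : ∀ t ≤ N, ∀ ω, Q t ω ∈ simplex 𝒴)
    (hQmeas : ∀ t ≤ N, ∀ y, Measurable[F t] fun ω => Q t ω y)
    (hQver : ∀ t ≤ N, ∀ y, (fun ω => Q t ω y)
      =ᵐ[P] P[Set.indicator {ω | Y ω = y} (fun _ => (1 : ℝ)) | F t])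
    (T₀ : Ω → 𝒴 → ℝ) (hT₀Δ : ∀ ω, T₀ ω ∈ simplexEps 𝒴 ε)
    (hT₀meas : ∀ y, Measurable[F 0] fun ω => T₀ ω y) :
    (∀ᵐ ω ∂P, ∀ t < N, ∀ y, Q t ω y = 0 → Q (t + 1) ω y = 0) ∧
    ∫ ω, -Real.log (T₀ ω (Y ω)) ∂P
      = ∫ ω, KLdiv (Q 0 ω) (T₀ ω) ∂P
        + ∑ t ∈ Finset.range N, ∫ ω, KLdiv (Q (t + 1) ω) (Q t ω) ∂P
        + ∫ ω, shEntropy (Q N ω) ∂P := by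
  -- basic facts
  have hQ0 : ∀ t, t ≤ N → ∀ ω y, 0 ≤ Q t ω y := fun t ht ω y => (hQΔ t ht ω).1 y
  have hQ1 : ∀ t, t ≤ N → ∀ ω y, Q t ω y ≤ 1 := by
    intro t ht ω y
    have h := Finset.single_le_sum (f := fun y => Q t ω y) (fun i _ => (hQΔ t ht ω).1 i)
      (Finset.mem_univ y)
    rw [(hQΔ t ht ω).2] at h
    exact h
  have hXmeas : ∀ y : 𝒴, Measurable[mΩ] (Set.indicator {ω | Y ω = y} (fun _ => (1 : ℝ))) :=
    fun y => measurable_const.indicator (hY (measurableSet_singleton y))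
  have hXint : ∀ y : 𝒴, Integrable (Set.indicator {ω | Y ω = y} (fun _ => (1 : ℝ))) P :=
    fun y => (integrable_const 1).indicator (hY (measurableSet_singleton y))
  -- Part 1: absolute continuity
  have habs : ∀ t, t < N → ∀ y : 𝒴, ∀ᵐ ω ∂P, Q t ω y = 0 → Q (t + 1) ω y = 0 := by
    intro t ht y
    have htN : t ≤ N := ht.le
    have ht1N : t + 1 ≤ N := ht
    have hSm : MeasurableSet[F t] {ω | Q t ω y = 0} :=
      hQmeas t htN y (measurableSet_singleton 0)
    have hSm1 : MeasurableSet[F (t + 1)] {ω | Q t ω y = 0} :=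
      hFmono t (t + 1) (Nat.le_succ t) ht1N _ hSm
    have hS : MeasurableSet[mΩ] {ω | Q t ω y = 0} := hFle t htN _ hSm
    have hz : ∫ ω in {ω | Q t ω y = 0}, Q t ω y ∂P = 0 := by
      refine integral_eq_zero_of_ae ?_
      filter_upwards [ae_restrict_mem hS] with ω hω
      exact hω
    have hint1 : ∫ ω in {ω | Q t ω y = 0}, Q t ω y ∂P
        = ∫ ω in {ω | Q t ω y = 0}, Set.indicator {ω | Y ω = y} (fun _ => (1 : ℝ)) ω ∂P := by
      rw [integral_congr_ae (ae_restrict_of_ae (hQver t htN y))]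
      exact setIntegral_condExp (hFle t htN) (hXint y) hSm
    have hint2 : ∫ ω in {ω | Q t ω y = 0}, Q (t + 1) ω y ∂P
        = ∫ ω in {ω | Q t ω y = 0}, Set.indicator {ω | Y ω = y} (fun _ => (1 : ℝ)) ω ∂P := by
      rw [integral_congr_ae (ae_restrict_of_ae (hQver (t + 1) ht1N y))]
      exact setIntegral_condExp (hFle (t + 1) ht1N) (hXint y) hSm1
    have hzero : ∫ ω in {ω | Q t ω y = 0}, Q (t + 1) ω y ∂P = 0 := by
      rw [hint2, ← hint1, hz]
    have hQint : Integrable (fun ω => Q (t + 1) ω y) (P.restrict {ω | Q t ω y = 0}) := by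
      refine Integrable.restrict ?_
      exact aux_integrable_of_bounded ((hQmeas (t + 1) ht1N y).mono (hFle (t + 1) ht1N) le_rfl)
        (C := 1) fun ω => abs_le.2 ⟨by linarith [hQ0 (t + 1) ht1N ω y], hQ1 (t + 1) ht1N ω y⟩
    have := (integral_eq_zero_iff_of_nonneg_ae
      (ae_of_all _ fun ω => hQ0 (t + 1) ht1N ω y) hQint).1 hzero
    have h2 := (ae_restrict_iff' hS).1 this
    filter_upwards [h2] with ω hω hQty
    exact hω hQty
  constructor
  · rw [ae_all_iff]
    intro t
    by_cases ht : t < N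
    · have := fun y => habs t ht y
      rw [← ae_all_iff] at this
      filter_upwards [this] with ω hω _ using hω
    · filter_upwards with ω h using absurd h ht

  -- measurability and sign facts for log Q
  have hlogmeas : ∀ t, t ≤ N → ∀ y : 𝒴, Measurable[F t] fun ω => Real.log (Q t ω y) :=
    fun t ht y => Real.measurable_log.comp (hQmeas t ht y)
  have hlog0 : ∀ t, t ≤ N → ∀ ω (y : 𝒴), Real.log (Q t ω y) ≤ 0 :=
    fun t ht ω y => Real.log_nonpos (hQ0 t ht ω y) (hQ1 t ht ω y)
  have hA : ∀ t, t ≤ N → ∀ y : 𝒴,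
      Integrable (fun ω => Q t ω y * Real.log (Q t ω y)) P := by
    intro t ht y
    exact (aux_key_transfer (hFle t ht) (hFle t ht) (hXint y) (hQver t ht y) (hQver t ht y)
      (hQmeas t ht y) (hQmeas t ht y) (fun ω => hQ0 t ht ω y) (fun ω => hQ1 t ht ω y)
      (fun ω => hQ0 t ht ω y) (fun ω => hQ1 t ht ω y) (hlogmeas t ht y) (hlogmeas t ht y)
      (fun ω => hlog0 t ht ω y)
      (fun ω => aux_neg_one_le_mul_log (hQ0 t ht ω y) (hQ1 t ht ω y))).1
  have hB : ∀ t, t < N → ∀ y : 𝒴,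
      Integrable (fun ω => Q (t + 1) ω y * Real.log (Q t ω y)) P ∧
      ∫ ω, Q (t + 1) ω y * Real.log (Q t ω y) ∂P
        = ∫ ω, Q t ω y * Real.log (Q t ω y) ∂P := by
    intro t ht y
    have ht1 : t + 1 ≤ N := ht
    have h := aux_key_transfer (hFle t ht.le) (hFle (t + 1) ht1) (hXint y) (hQver t ht.le y)
      (hQver (t + 1) ht1 y) (hQmeas t ht.le y) (hQmeas (t + 1) ht1 y)
      (fun ω => hQ0 t ht.le ω y) (fun ω => hQ1 t ht.le ω y)
      (fun ω => hQ0 (t + 1) ht1 ω y) (fun ω => hQ1 (t + 1) ht1 ω y)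
      (hlogmeas t ht.le y)
      ((hlogmeas t ht.le y).mono (hFmono t (t + 1) (Nat.le_succ t) ht1) le_rfl)
      (fun ω => hlog0 t ht.le ω y)
      (fun ω => aux_neg_one_le_mul_log (hQ0 t ht.le ω y) (hQ1 t ht.le ω y))
    exact ⟨h.2.1, h.2.2⟩
  -- facts about T₀
  have hT0pos : ∀ ω (y : 𝒴), 0 < T₀ ω y := fun ω y => lt_of_lt_of_le hε ((hT₀Δ ω).2 y)
  have hT0le1 : ∀ ω (y : 𝒴), T₀ ω y ≤ 1 := by
    intro ω y
    have h := Finset.single_le_sum (f := fun y => T₀ ω y) (fun i _ => (hT₀Δ ω).1.1 i)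
      (Finset.mem_univ y)
    rw [(hT₀Δ ω).1.2] at h
    exact h
  have hlogT0bd : ∀ ω (y : 𝒴), |(-Real.log (T₀ ω y))| ≤ |Real.log ε| := by
    intro ω y
    have h1 : Real.log ε ≤ Real.log (T₀ ω y) := Real.log_le_log hε ((hT₀Δ ω).2 y)
    have h2 : Real.log (T₀ ω y) ≤ 0 :=
      Real.log_nonpos (le_of_lt (hT0pos ω y)) (hT0le1 ω y)
    rw [abs_le]
    constructor
    · linarith [abs_nonneg (Real.log ε)]
    · linarith [neg_le_abs (Real.log ε)]
  have hT0logmeas : ∀ y : 𝒴, Measurable[F 0] fun ω => -Real.log (T₀ ω y) :=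
    fun y => (Real.measurable_log.comp (hT₀meas y)).neg
  have hXbd : ∀ (y : 𝒴) ω, |Set.indicator {ω | Y ω = y} (fun _ => (1 : ℝ)) ω| ≤ 1 := by
    intro y ω
    classical
    rw [Set.indicator_apply]
    split_ifs <;> simp
  have hXg_int : ∀ y : 𝒴, Integrable
      (fun ω => Set.indicator {ω | Y ω = y} (fun _ => (1 : ℝ)) ω * (-Real.log (T₀ ω y))) P := by
    intro y
    refine aux_integrable_of_bounded
      ((hXmeas y).mul ((hT0logmeas y).mono (hFle 0 (Nat.zero_le N)) le_rfl))
      (C := |Real.log ε|) fun ω => ?_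
    rw [abs_mul]
    calc |Set.indicator {ω | Y ω = y} (fun _ => (1 : ℝ)) ω| * |(-Real.log (T₀ ω y))|
        ≤ 1 * |Real.log ε| :=
          mul_le_mul (hXbd y ω) (hlogT0bd ω y) (abs_nonneg _) zero_le_one
      _ = |Real.log ε| := one_mul _
  have hQ0g_int : ∀ y : 𝒴, Integrable (fun ω => Q 0 ω y * (-Real.log (T₀ ω y))) P := by
    intro y
    refine aux_integrable_of_bounded
      (((hQmeas 0 (Nat.zero_le N) y).mono (hFle 0 (Nat.zero_le N)) le_rfl).mul
        ((hT0logmeas y).mono (hFle 0 (Nat.zero_le N)) le_rfl))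
      (C := |Real.log ε|) fun ω => ?_
    rw [abs_mul]
    calc |Q 0 ω y| * |(-Real.log (T₀ ω y))| ≤ 1 * |Real.log ε| := by
          refine mul_le_mul ?_ (hlogT0bd ω y) (abs_nonneg _) zero_le_one
          rw [abs_le]
          exact ⟨by linarith [hQ0 0 (Nat.zero_le N) ω y], hQ1 0 (Nat.zero_le N) ω y⟩
      _ = |Real.log ε| := one_mul _
  -- step 1 : the left-hand side
  have hLHSpt : ∀ ω, -Real.log (T₀ ω (Y ω))
      = ∑ y, Set.indicator {ω | Y ω = y} (fun _ => (1 : ℝ)) ω * (-Real.log (T₀ ω y)) := by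
    intro ω
    rw [Finset.sum_eq_single (Y ω)]
    · simp [Set.indicator_apply]
    · intro y _ hy
      have hne : Y ω ≠ y := fun h => hy h.symm
      simp [Set.indicator_apply, hne]
    · intro h
      exact absurd (Finset.mem_univ _) h
  have hLHS : ∫ ω, -Real.log (T₀ ω (Y ω)) ∂P
      = ∑ y, ∫ ω, Q 0 ω y * (-Real.log (T₀ ω y)) ∂P := by
    calc ∫ ω, -Real.log (T₀ ω (Y ω)) ∂P
        = ∫ ω, ∑ y, Set.indicator {ω | Y ω = y} (fun _ => (1 : ℝ)) ω * (-Real.log (T₀ ω y)) ∂P :=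
          integral_congr_ae (ae_of_all _ hLHSpt)
      _ = ∑ y, ∫ ω, Set.indicator {ω | Y ω = y} (fun _ => (1 : ℝ)) ω * (-Real.log (T₀ ω y)) ∂P :=
          integral_finset_sum _ fun y _ => hXg_int y
      _ = ∑ y, ∫ ω, Q 0 ω y * (-Real.log (T₀ ω y)) ∂P := by
          refine Finset.sum_congr rfl fun y _ => ?_
          exact (aux_transfer_bounded (hFle 0 (Nat.zero_le N)) (hXint y)
            (hQver 0 (Nat.zero_le N) y) (hT0logmeas y) (fun ω => hlogT0bd ω y)).symm
  -- step 2 : the first KL term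
  have hKL0pt : ∀ ω, KLdiv (Q 0 ω) (T₀ ω)
      = ∑ y, (Q 0 ω y * Real.log (Q 0 ω y) + Q 0 ω y * (-Real.log (T₀ ω y))) := by
    intro ω
    unfold KLdiv
    refine Finset.sum_congr rfl fun y _ => ?_
    rcases eq_or_lt_of_le (hQ0 0 (Nat.zero_le N) ω y) with h | h
    · rw [← h]; simp
    · rw [Real.log_div (ne_of_gt h) (ne_of_gt (hT0pos ω y))]; ring
  have hKL0 : ∫ ω, KLdiv (Q 0 ω) (T₀ ω) ∂P
      = (∑ y, ∫ ω, Q 0 ω y * Real.log (Q 0 ω y) ∂P)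
        + ∑ y, ∫ ω, Q 0 ω y * (-Real.log (T₀ ω y)) ∂P := by
    calc ∫ ω, KLdiv (Q 0 ω) (T₀ ω) ∂P
        = ∫ ω, ∑ y, (Q 0 ω y * Real.log (Q 0 ω y) + Q 0 ω y * (-Real.log (T₀ ω y))) ∂P :=
          integral_congr_ae (ae_of_all _ hKL0pt)
      _ = ∑ y, ∫ ω, (Q 0 ω y * Real.log (Q 0 ω y) + Q 0 ω y * (-Real.log (T₀ ω y))) ∂P :=
          integral_finset_sum _ fun y _ => (hA 0 (Nat.zero_le N) y).add (hQ0g_int y)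
      _ = _ := by
          rw [← Finset.sum_add_distrib]
          exact Finset.sum_congr rfl fun y _ =>
            integral_add (hA 0 (Nat.zero_le N) y) (hQ0g_int y)
  -- step 3 : the intermediate KL terms
  have hKLt : ∀ t, t < N → ∫ ω, KLdiv (Q (t + 1) ω) (Q t ω) ∂P
      = (∑ y, ∫ ω, Q (t + 1) ω y * Real.log (Q (t + 1) ω y) ∂P)
        - ∑ y, ∫ ω, Q t ω y * Real.log (Q t ω y) ∂P := by
    intro t ht
    have ht1 : t + 1 ≤ N := ht
    have hpt : ∀ᵐ ω ∂P, KLdiv (Q (t + 1) ω) (Q t ω)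
        = ∑ y, (Q (t + 1) ω y * Real.log (Q (t + 1) ω y)
            - Q (t + 1) ω y * Real.log (Q t ω y)) := by
      have hae : ∀ᵐ ω ∂P, ∀ y : 𝒴, Q t ω y = 0 → Q (t + 1) ω y = 0 :=
        ae_all_iff.2 fun y => habs t ht y
      filter_upwards [hae] with ω hω
      unfold KLdiv
      refine Finset.sum_congr rfl fun y _ => ?_
      rcases eq_or_lt_of_le (hQ0 (t + 1) ht1 ω y) with h | h
      · rw [← h]; simp
      · have hQt : Q t ω y ≠ 0 := fun h0 => absurd (hω y h0) (ne_of_gt h)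
        rw [Real.log_div (ne_of_gt h) hQt]; ring
    calc ∫ ω, KLdiv (Q (t + 1) ω) (Q t ω) ∂P
        = ∫ ω, ∑ y, (Q (t + 1) ω y * Real.log (Q (t + 1) ω y)
            - Q (t + 1) ω y * Real.log (Q t ω y)) ∂P := integral_congr_ae hpt
      _ = ∑ y, ∫ ω, (Q (t + 1) ω y * Real.log (Q (t + 1) ω y)
            - Q (t + 1) ω y * Real.log (Q t ω y)) ∂P :=
          integral_finset_sum _ fun y _ => (hA (t + 1) ht1 y).sub (hB t ht y).1
      _ = ∑ y, (∫ ω, Q (t + 1) ω y * Real.log (Q (t + 1) ω y) ∂P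
            - ∫ ω, Q t ω y * Real.log (Q t ω y) ∂P) := by
          refine Finset.sum_congr rfl fun y _ => ?_
          rw [integral_sub (hA (t + 1) ht1 y) (hB t ht y).1, (hB t ht y).2]
      _ = _ := Finset.sum_sub_distrib _ _
  -- step 4 : the entropy term
  have hEnt : ∫ ω, shEntropy (Q N ω) ∂P
      = -∑ y, ∫ ω, Q N ω y * Real.log (Q N ω y) ∂P := by
    calc ∫ ω, shEntropy (Q N ω) ∂P
        = ∫ ω, -∑ y, Q N ω y * Real.log (Q N ω y) ∂P :=
          integral_congr_ae (ae_of_all _ fun ω => rfl)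
      _ = -∫ ω, ∑ y, Q N ω y * Real.log (Q N ω y) ∂P := integral_neg _
      _ = -∑ y, ∫ ω, Q N ω y * Real.log (Q N ω y) ∂P := by
          rw [integral_finset_sum _ fun y _ => hA N le_rfl y]
  -- telescoping
  have htel : ∑ t ∈ Finset.range N, ∫ ω, KLdiv (Q (t + 1) ω) (Q t ω) ∂P
      = (∑ y, ∫ ω, Q N ω y * Real.log (Q N ω y) ∂P)
        - ∑ y, ∫ ω, Q 0 ω y * Real.log (Q 0 ω y) ∂P := by
    rw [← Finset.sum_range_sub (fun t => ∑ y, ∫ ω, Q t ω y * Real.log (Q t ω y) ∂P) N]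
    exact Finset.sum_congr rfl fun t htm => hKLt t (Finset.mem_range.1 htm)
  rw [hLHS, hKL0, htel, hEnt]
  ring
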